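/- (Too many touched vertices implies low value.) In the clique-reduction instance, assume 0 < ε < 1/(k+1), 0 < δ < 1, 2 ≤ k ≤ n, and that t > 0 satisfies (k+1)·(K/ε + αt)/(K + αt) < 1/ε where α = 1/(2m). Let b be a solution with b_v = 1 for every vertex keyword v ∈ V_G, and let X = {e ∈ E_G : b_e ≥ α}. If at least k+1 vertices of G are incident to some edge in X, then E[value(b)] < V. -/

import Mathlib

open Finset

/-- Value obtained in scenario `σ₀` of the clique-reduction instance (budget `Kr`):
every edge keyword receives one click and vertex keywords receive none; edge keywords
have cost-per-click 1. -/
noncomputable def crVal0 {V : Type*} [Fintype V] [DecidableEq V] (G : SimpleGraph V)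
    [DecidableRel G.Adj] (Kr : ℝ) (bE : Sym2 V → ℝ) : ℝ :=
  (∑ e ∈ G.edgeFinset, bE e * 1) /
    max 1 ((∑ e ∈ G.edgeFinset, bE e * 1 * 1) / Kr)

/-- Value obtained in scenario `σ_v` of the clique-reduction instance (budget `Kr`):
keyword `v` (cost-per-click `ε`) receives `Kr/ε` clicks, each edge keyword incident to `v`
(cost-per-click 1) receives `t` clicks, and all other keywords receive none. -/
noncomputable def crValv {V : Type*} [Fintype V] [DecidableEq V] (G : SimpleGraph V)
    [DecidableRel G.Adj] (Kr ε t : ℝ) (bE : Sym2 V → ℝ) (bV : V → ℝ) (v : V) : ℝ :=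
  (bV v * (Kr / ε) + ∑ e ∈ G.edgeFinset, bE e * (if v ∈ e then t else 0)) /
    max 1 ((bV v * ε * (Kr / ε) +
      ∑ e ∈ G.edgeFinset, bE e * 1 * (if v ∈ e then t else 0)) / Kr)

/-- Expected value in the clique-reduction instance: scenario `σ₀` has probability `1−δ`
and each scenario `σ_v` has probability `δ/n`, where `n` is the number of vertices. -/
noncomputable def crEv {V : Type*} [Fintype V] [DecidableEq V] (G : SimpleGraph V)
    [DecidableRel G.Adj] (Kr ε δ t : ℝ) (bE : Sym2 V → ℝ) (bV : V → ℝ) : ℝ :=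
  (1 - δ) * crVal0 G Kr bE +
    ∑ v : V, (δ / (Fintype.card V : ℝ)) * crValv G Kr ε t bE bV v

set_option maxHeartbeats 1000000 in
/-- **Too many touched vertices implies low value.** Suppose the solution bids fully on all
vertex keywords, and let `X` be the set of edge keywords with `bE e ≥ α = 1/(2m)`. If at
least `k+1` vertices of `G` are incident to some edge in `X`, then the expected value is
strictly below `V = (1−δ)·K + (δ(n−k)/n)·(K/ε)`, where `K = k(k−1)/2`. -/
theorem stmt_16 {V : Type*} [Fintype V] [DecidableEq V] (G : SimpleGraph V)
    [DecidableRel G.Adj]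
    (k : ℕ) (hk : 2 ≤ k) (hkn : k ≤ Fintype.card V) (hm : 1 ≤ G.edgeFinset.card)
    (ε δ t : ℝ) (hε0 : 0 < ε) (hε1 : ε < 1 / (k + 1)) (hδ0 : 0 < δ) (hδ1 : δ < 1)
    (ht : 0 < t)
    (hparam : (k + 1 : ℝ) *
        ((k * (k - 1) / 2 : ℝ) / ε + (1 / (2 * (G.edgeFinset.card : ℝ))) * t) /
        ((k * (k - 1) / 2 : ℝ) + (1 / (2 * (G.edgeFinset.card : ℝ))) * t) < 1 / ε)
    (bE : Sym2 V → ℝ)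
    (hbE : ∀ e ∈ G.edgeFinset, 0 ≤ bE e ∧ bE e ≤ 1)
    (htouch : k + 1 ≤
      {v : V | ∃ e ∈ G.edgeFinset,
        1 / (2 * (G.edgeFinset.card : ℝ)) ≤ bE e ∧ v ∈ e}.ncard) :
    crEv G (k * (k - 1) / 2 : ℝ) ε δ t bE (fun _ => 1) <
      (1 - δ) * (k * (k - 1) / 2 : ℝ) +
        (δ * ((Fintype.card V : ℝ) - k) / (Fintype.card V : ℝ)) *
          ((k * (k - 1) / 2 : ℝ) / ε) := by
  classical
  set m := G.edgeFinset.card with hmdef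
  set K : ℝ := (k * (k - 1) / 2 : ℝ) with hKdef
  set α : ℝ := 1 / (2 * (m : ℝ)) with hαdef
  set n := Fintype.card V with hndef
  have hk2 : (2:ℝ) ≤ (k:ℝ) := by exact_mod_cast hk
  have hK1 : (1:ℝ) ≤ K := by rw [hKdef]; nlinarith
  have hK0 : (0:ℝ) < K := lt_of_lt_of_le one_pos hK1
  have hn0 : (0:ℝ) < (n:ℝ) := by
    have : 2 ≤ n := le_trans hk hkn
    exact_mod_cast lt_of_lt_of_le Nat.zero_lt_two this
  have hm0 : (0:ℝ) < (m:ℝ) := by exact_mod_cast hm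
  have hα0 : 0 < α := by rw [hαdef]; positivity
  have hε1' : ε < 1 := by
    have h1 : (1:ℝ) / (k + 1) ≤ 1 := by
      rw [div_le_one (by linarith)]; linarith
    linarith
  -- the per-vertex click sum
  set A : V → ℝ := fun v => ∑ e ∈ G.edgeFinset, bE e * (if v ∈ e then t else 0) with hAdef
  have hA0 : ∀ v, 0 ≤ A v := by
    intro v
    apply Finset.sum_nonneg
    intro e he
    exact mul_nonneg (hbE e he).1 (by positivity)
  -- simplify crValv
  have hvalv : ∀ v, crValv G K ε t bE (fun _ => 1) v = (K / ε + A v) * K / (K + A v) := by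
    intro v
    unfold crValv
    simp only [one_mul, mul_one]
    have hKe : ε * (K / ε) = K := by field_simp
    rw [hKe]
    have hmax : max 1 ((K + A v) / K) = (K + A v) / K := by
      apply max_eq_right
      rw [le_div_iff₀ hK0]
      have := hA0 v
      linarith
    rw [hmax, div_div_eq_mul_div]
  -- monotonicity bound
  have key : ∀ B C : ℝ, 0 ≤ B → B ≤ C →
      (K / ε + C) * K / (K + C) ≤ (K / ε + B) * K / (K + B) := by
    intro B C hB hBC
    have hKe : K ≤ K / ε := by
      rw [le_div_iff₀ hε0]; nlinarith
    rw [div_le_div_iff₀ (by linarith) (by linarith)]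
    nlinarith [mul_nonneg (mul_nonneg hK0.le (sub_nonneg.2 hBC)) (sub_nonneg.2 hKe)]
  -- bound for every vertex
  have hub : ∀ v, crValv G K ε t bE (fun _ => 1) v ≤ K / ε := by
    intro v
    rw [hvalv v]
    have h := key 0 (A v) le_rfl (hA0 v)
    have he : (K / ε + 0) * K / (K + 0) = K / ε := by field_simp; ring
    rw [he] at h
    exact h
  set F : ℝ := (K / ε + α * t) * K / (K + α * t) with hFdef
  -- touched vertices
  obtain ⟨T, hTsub, hTcard⟩ :
      ∃ T ⊆ {v : V | ∃ e ∈ G.edgeFinset, α ≤ bE e ∧ v ∈ e}.toFinset, T.card = k + 1 := by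
    apply Finset.exists_subset_card_eq
    rwa [← Set.ncard_eq_toFinset_card']
  have hTb : ∀ v ∈ T, crValv G K ε t bE (fun _ => 1) v ≤ F := by
    intro v hv
    have hvS := hTsub hv
    rw [Set.mem_toFinset] at hvS
    obtain ⟨e, he, hbe, hve⟩ := hvS
    have hAv : α * t ≤ A v := by
      have hterm : α * t ≤ bE e * (if v ∈ e then t else 0) := by
        rw [if_pos hve]
        exact mul_le_mul_of_nonneg_right hbe ht.le
      calc α * t ≤ bE e * (if v ∈ e then t else 0) := hterm
        _ ≤ A v := Finset.single_le_sum (f := fun e => bE e * (if v ∈ e then t else 0))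
            (fun e' he' => mul_nonneg (hbE e' he').1 (by positivity)) he
    rw [hvalv v]
    exact key (α * t) (A v) (by positivity) hAv
  have hTn : (k:ℝ) + 1 ≤ (n:ℝ) := by
    have := Finset.card_le_univ T
    rw [hTcard] at this
    exact_mod_cast this
  -- bound the sum over all vertices
  have hsum : ∑ v : V, crValv G K ε t bE (fun _ => 1) v ≤
      ((k:ℝ) + 1) * F + ((n:ℝ) - ((k:ℝ) + 1)) * (K / ε) := by
    rw [← Finset.sum_add_sum_compl T]
    have h1 : ∑ v ∈ T, crValv G K ε t bE (fun _ => 1) v ≤ ((k:ℝ) + 1) * F := by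
      have := Finset.sum_le_card_nsmul T _ F hTb
      rw [hTcard, nsmul_eq_mul] at this
      exact_mod_cast this
    have h2 : ∑ v ∈ Tᶜ, crValv G K ε t bE (fun _ => 1) v ≤
        ((n:ℝ) - ((k:ℝ) + 1)) * (K / ε) := by
      have hcb := Finset.sum_le_card_nsmul Tᶜ _ (K / ε) (fun v _ => hub v)
      rw [nsmul_eq_mul] at hcb
      have hcc : ((Tᶜ.card : ℕ) : ℝ) = (n:ℝ) - ((k:ℝ) + 1) := by
        rw [Finset.card_compl, hTcard, ← hndef]
        have hle : k + 1 ≤ n := by exact_mod_cast hTn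
        push_cast [Nat.cast_sub hle]
        ring
      rw [hcc] at hcb
      exact hcb
    linarith
  -- bound crVal0
  have h0 : crVal0 G K bE ≤ K := by
    unfold crVal0
    simp only [mul_one]
    set S := ∑ e ∈ G.edgeFinset, bE e with hSdef
    have hmaxpos : (0:ℝ) < max 1 (S / K) := lt_of_lt_of_le one_pos (le_max_left _ _)
    rw [div_le_iff₀ hmaxpos]
    have hSK : S = K * (S / K) := by field_simp
    calc S = K * (S / K) := hSK
      _ ≤ K * max 1 (S / K) := by
          exact mul_le_mul_of_nonneg_left (le_max_right _ _) hK0.le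
  -- key strict inequality from hparam
  have hkF : ((k:ℝ) + 1) * F < K / ε := by
    have heq : ((k:ℝ) + 1) * F = K * (((k:ℝ) + 1) * (K / ε + α * t) / (K + α * t)) := by
      rw [hFdef]; ring
    rw [heq]
    calc K * (((k:ℝ) + 1) * (K / ε + α * t) / (K + α * t)) < K * (1 / ε) :=
          mul_lt_mul_of_pos_left hparam hK0
      _ = K / ε := by rw [mul_one_div]
  -- assemble
  unfold crEv
  rw [← hndef, ← Finset.mul_sum]
  have hδn : (0:ℝ) < δ / (n:ℝ) := div_pos hδ0 hn0
  have hS' : ∑ v : V, crValv G K ε t bE (fun _ => 1) v < ((n:ℝ) - (k:ℝ)) * (K / ε) := by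
    have hexp : ((n:ℝ) - (k:ℝ)) * (K / ε) =
        ((n:ℝ) - ((k:ℝ) + 1)) * (K / ε) + K / ε := by ring
    linarith
  have h2 : δ / (n:ℝ) * ∑ v : V, crValv G K ε t bE (fun _ => 1) v <
      δ * ((n:ℝ) - (k:ℝ)) / (n:ℝ) * (K / ε) := by
    calc δ / (n:ℝ) * ∑ v : V, crValv G K ε t bE (fun _ => 1) v
        < δ / (n:ℝ) * (((n:ℝ) - (k:ℝ)) * (K / ε)) := by
          exact mul_lt_mul_of_pos_left hS' hδn
      _ = δ * ((n:ℝ) - (k:ℝ)) / (n:ℝ) * (K / ε) := by ring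
  have h1 : (1 - δ) * crVal0 G K bE ≤ (1 - δ) * K :=
    mul_le_mul_of_nonneg_left h0 (by linarith)
  linarith
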